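/- For every prime p ≥ 5 and every positive integer n, C(np, p) ≡ n (mod p^3). -/

import Mathlib

open Finset

/-- expansion of a product of `1 + a * x k` modulo `a ^ 3`. -/
lemma prod_one_add_nilpotent {R : Type*} [CommRing R] (a : R) (ha : a ^ 3 = 0)
    {ι : Type*} (s : Finset ι) (x : ι → R) :
    ∃ t : R, (∏ k ∈ s, (1 + a * x k)) = 1 + a * (∑ k ∈ s, x k) + a ^ 2 * t ∧
      2 * t = (∑ k ∈ s, x k) ^ 2 - (∑ k ∈ s, x k ^ 2) := by
  classical
  induction s using Finset.induction with
  | empty => exact ⟨0, by simp⟩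
  | @insert i s hi ih =>
    obtain ⟨t, h1, h2⟩ := ih
    refine ⟨t + x i * (∑ k ∈ s, x k), ?_, ?_⟩
    · rw [Finset.prod_insert hi, h1, Finset.sum_insert hi]
      linear_combination (x i * t) * ha
    · rw [Finset.sum_insert hi, Finset.sum_insert hi]
      linear_combination h2

lemma prod_Ioo_eq_range {M : Type*} [CommMonoid M] (p : ℕ) (f : ℕ → M) :
    ∏ k ∈ Finset.Ioo 0 p, f k = ∏ i ∈ Finset.range (p - 1), f (i + 1) := by
  apply Finset.prod_nbij' (fun k => k - 1) (fun i => i + 1)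
  · intro a ha; simp only [mem_Ioo] at ha; simp only [mem_range]; omega
  · intro a ha; simp only [mem_range] at ha; simp only [mem_Ioo]; omega
  · intro a ha; simp only [mem_Ioo] at ha; omega
  · intro a ha; omega
  · intro a ha; simp only [mem_Ioo] at ha; congr 1; omega

lemma six_mul_sum_sq (m : ℕ) :
    6 * ∑ k ∈ range (m + 1), k ^ 2 = m * (m + 1) * (2 * m + 1) := by
  induction m with
  | zero => simp
  | succ m ih => rw [Finset.sum_range_succ, Nat.mul_add, ih]; ring

lemma sum_range_natCast {p : ℕ} [NeZero p] {M : Type*} [AddCommMonoid M] (f : ZMod p → M) :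
    ∑ k ∈ range p, f (k : ZMod p) = ∑ x : ZMod p, f x := by
  refine Finset.sum_nbij' (i := fun k : ℕ => (k : ZMod p)) (j := fun x : ZMod p => x.val)
    ?_ ?_ ?_ ?_ ?_
  · intro a _; exact Finset.mem_univ _
  · intro x _; exact Finset.mem_range.2 (ZMod.val_lt x)
  · intro a ha; exact ZMod.val_cast_of_lt (Finset.mem_range.1 ha)
  · intro x _; exact ZMod.natCast_zmod_val x
  · intro a _; rfl

lemma sum_sq_zmod (p : ℕ) (hp : p.Prime) (h5 : 5 ≤ p) [NeZero p] :
    ∑ x : ZMod p, x ^ 2 = 0 := by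
  rw [← sum_range_natCast (fun x : ZMod p => x ^ 2)]
  have h1 : ∑ k ∈ range p, ((k : ZMod p)) ^ 2 = ((∑ k ∈ range p, k ^ 2 : ℕ) : ZMod p) := by
    push_cast; rfl
  rw [h1, ZMod.natCast_eq_zero_iff]
  have hgauss : 6 * ∑ k ∈ range p, k ^ 2 = (p - 1) * p * (2 * (p - 1) + 1) := by
    have h2 := six_mul_sum_sq (p - 1)
    have hp1 : p - 1 + 1 = p := Nat.succ_pred_eq_of_pos hp.pos
    rw [hp1] at h2; exact h2
  have hdvd : p ∣ 6 * ∑ k ∈ range p, k ^ 2 := by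
    rw [hgauss]; exact ⟨(p - 1) * (2 * (p - 1) + 1), by ring⟩
  have hcop : Nat.Coprime p 6 := by
    have h6 : ¬ p ∣ 6 := by
      intro h
      have := Nat.le_of_dvd (by norm_num) h
      interval_cases p
      · omega
      · exact absurd hp (by norm_num)
    exact (Nat.Prime.coprime_iff_not_dvd hp).2 h6
  exact (Nat.Coprime.dvd_of_dvd_mul_left hcop hdvd)

lemma cast_inv_coprime {m n : ℕ} (k : ℕ) (h : m ∣ n) (hk : Nat.Coprime k n) :
    ZMod.castHom h (ZMod m) ((k : ZMod n)⁻¹) = ((k : ZMod m))⁻¹ := by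
  have h1 : (k : ZMod n) * (k : ZMod n)⁻¹ = 1 := ZMod.coe_mul_inv_eq_one k hk
  have h2 : (k : ZMod m) * (k : ZMod m)⁻¹ = 1 :=
    ZMod.coe_mul_inv_eq_one k (Nat.Coprime.coprime_dvd_right h hk)
  have h3 := congrArg (ZMod.castHom h (ZMod m)) h1
  rw [map_mul, map_natCast, map_one] at h3
  calc ZMod.castHom h (ZMod m) ((k : ZMod n)⁻¹)
      = ((k : ZMod m) * (k : ZMod m)⁻¹) * ZMod.castHom h (ZMod m) ((k : ZMod n)⁻¹) := by
        rw [h2, one_mul]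
    _ = (k : ZMod m)⁻¹ * ((k : ZMod m) * ZMod.castHom h (ZMod m) ((k : ZMod n)⁻¹)) := by ring
    _ = (k : ZMod m)⁻¹ := by rw [h3, mul_one]

/-- Sum of inverse squares is 0 mod p. -/
lemma sum_inv_sq_zmod (p : ℕ) (hp : p.Prime) (h5 : 5 ≤ p) :
    ∑ k ∈ Finset.Ioo 0 p, ((k : ZMod p)⁻¹) ^ 2 = 0 := by
  haveI : NeZero p := ⟨hp.ne_zero⟩
  haveI : Fact p.Prime := ⟨hp⟩
  have h0 : ∑ k ∈ Finset.Ioo 0 p, ((k : ZMod p)⁻¹) ^ 2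
      = ∑ k ∈ range p, ((k : ZMod p)⁻¹) ^ 2 := by
    have : range p = insert 0 (Finset.Ioo 0 p) := by
      ext k; simp only [mem_range, mem_insert, mem_Ioo]; omega
    rw [this, Finset.sum_insert (by simp)]
    simp
  rw [h0, sum_range_natCast (fun x : ZMod p => (x⁻¹) ^ 2)]
  have hbij : ∑ x : ZMod p, (x⁻¹) ^ 2 = ∑ x : ZMod p, x ^ 2 := by
    have hinv : Function.Involutive (fun x : ZMod p => x⁻¹) := fun x => inv_inv x
    apply Finset.sum_bijective (fun x : ZMod p => x⁻¹) hinv.bijective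
    · intro x; simp
    · intro x _; simp
  rw [hbij]; exact sum_sq_zmod p hp h5

lemma coprime_of_mem_Ioo {p k : ℕ} (hp : p.Prime) (hk : k ∈ Finset.Ioo 0 p) (m : ℕ) :
    Nat.Coprime k (p ^ m) := by
  simp only [mem_Ioo] at hk
  refine Nat.Coprime.pow_right m ?_
  exact Nat.coprime_comm.1 ((Nat.Prime.coprime_iff_not_dvd hp).2
    (fun h => absurd (Nat.le_of_dvd hk.1 h) (by omega)))

lemma exists_eq_mul_of_castHom_eq_zero {a b : ℕ} [NeZero b] (h : a ∣ b) (x : ZMod b)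
    (hx : ZMod.castHom h (ZMod a) x = 0) : ∃ c : ZMod b, x = (a : ZMod b) * c := by
  have h1 : (x.val : ZMod a) = 0 := by
    rw [ZMod.natCast_val, ← ZMod.castHom_apply (h := h), hx]
  rw [ZMod.natCast_eq_zero_iff] at h1
  obtain ⟨c, hc⟩ := h1
  exact ⟨(c : ZMod b), by rw [← ZMod.natCast_zmod_val x, hc]; push_cast; ring⟩

/-- Wolstenholme: the harmonic sum is 0 mod p². -/
lemma sum_inv_zmod_sq (p : ℕ) (hp : p.Prime) (h5 : 5 ≤ p) :
    ∑ k ∈ Finset.Ioo 0 p, ((k : ZMod (p ^ 2)))⁻¹ = 0 := by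
  haveI : NeZero p := ⟨hp.ne_zero⟩
  haveI : Fact p.Prime := ⟨hp⟩
  haveI : NeZero (p ^ 2) := ⟨pow_ne_zero 2 hp.ne_zero⟩
  set Z := ZMod (p ^ 2)
  set S : Z := ∑ k ∈ Finset.Ioo 0 p, ((k : Z))⁻¹ with hS
  -- reflection
  have hrefl : S = ∑ k ∈ Finset.Ioo 0 p, (((p - k : ℕ) : Z))⁻¹ := by
    rw [hS]
    refine Finset.sum_nbij' (i := fun k : ℕ => p - k) (j := fun k : ℕ => p - k) ?_ ?_ ?_ ?_ ?_
    · intro a ha; simp only [mem_Ioo] at ha ⊢; omega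
    · intro a ha; simp only [mem_Ioo] at ha ⊢; omega
    · intro a ha; simp only [mem_Ioo] at ha; show p - (p - a) = a; omega
    · intro a ha; simp only [mem_Ioo] at ha; show p - (p - a) = a; omega
    · intro a ha; simp only [mem_Ioo] at ha
      show ((a : Z))⁻¹ = (((p - (p - a) : ℕ) : Z))⁻¹
      have : p - (p - a) = a := by omega
      rw [this]
  have hpair : ∀ k ∈ Finset.Ioo 0 p,
      ((k : Z))⁻¹ + (((p - k : ℕ) : Z))⁻¹
        = (p : Z) * (((k : Z))⁻¹ * (((p - k : ℕ) : Z))⁻¹) := by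
    intro k hk
    have hk' := Finset.mem_Ioo.1 hk
    have hmem : p - k ∈ Finset.Ioo 0 p := by simp only [mem_Ioo]; omega
    have hu : (k : Z) * ((k : Z))⁻¹ = 1 :=
      ZMod.coe_mul_inv_eq_one k (coprime_of_mem_Ioo hp hk 2)
    have hv : ((p - k : ℕ) : Z) * (((p - k : ℕ) : Z))⁻¹ = 1 :=
      ZMod.coe_mul_inv_eq_one _ (coprime_of_mem_Ioo hp hmem 2)
    have hsum : (k : Z) + ((p - k : ℕ) : Z) = (p : Z) := by
      have : (k : ℕ) ≤ p := by omega
      push_cast [this]; ring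
    linear_combination (-(((p - k : ℕ) : Z))⁻¹) * hu + (-((k : Z))⁻¹) * hv
      + (((k : Z))⁻¹ * (((p - k : ℕ) : Z))⁻¹) * hsum
  set T : Z := ∑ k ∈ Finset.Ioo 0 p, ((k : Z))⁻¹ * (((p - k : ℕ) : Z))⁻¹ with hT
  have h2S : 2 * S = (p : Z) * T := by
    calc 2 * S = S + S := by ring
    _ = ∑ k ∈ Finset.Ioo 0 p, (((k : Z))⁻¹ + (((p - k : ℕ) : Z))⁻¹) := by
        nth_rewrite 2 [hrefl]
        rw [hS, ← Finset.sum_add_distrib]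
    _ = ∑ k ∈ Finset.Ioo 0 p, (p : Z) * (((k : Z))⁻¹ * (((p - k : ℕ) : Z))⁻¹) :=
        Finset.sum_congr rfl hpair
    _ = (p : Z) * T := by rw [hT, Finset.mul_sum]
  -- T is divisible by p
  have hdvd : p ∣ p ^ 2 := dvd_pow_self p (by norm_num)
  have hTcast : ZMod.castHom hdvd (ZMod p) T = 0 := by
    rw [hT, map_sum]
    have : ∀ k ∈ Finset.Ioo 0 p,
        ZMod.castHom hdvd (ZMod p) (((k : Z))⁻¹ * (((p - k : ℕ) : Z))⁻¹)
          = -(((k : ZMod p))⁻¹ ^ 2) := by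
      intro k hk
      have hk' := Finset.mem_Ioo.1 hk
      have hmem : p - k ∈ Finset.Ioo 0 p := by simp only [mem_Ioo]; omega
      rw [map_mul, cast_inv_coprime k hdvd (coprime_of_mem_Ioo hp hk 2),
        cast_inv_coprime (p - k) hdvd (coprime_of_mem_Ioo hp hmem 2)]
      have : ((p - k : ℕ) : ZMod p) = -(k : ZMod p) := by
        have hle : (k : ℕ) ≤ p := by omega
        push_cast [hle]
        simp
      rw [this, inv_neg]
      ring
    rw [Finset.sum_congr rfl this, Finset.sum_neg_distrib]
    rw [sum_inv_sq_zmod p hp h5, neg_zero]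
  obtain ⟨c, hc⟩ := exists_eq_mul_of_castHom_eq_zero hdvd T hTcast
  have hpT : (p : Z) * T = 0 := by
    rw [hc, ← mul_assoc, ← Nat.cast_mul, show p * p = p ^ 2 by ring,
      ZMod.natCast_self, zero_mul]
  have h2 : (2 : Z) * S = 0 := by rw [h2S, hpT]
  have hunit : IsUnit (2 : Z) := by
    have : ((2 : ℕ) : Z) = (2 : Z) := by norm_cast
    rw [← this, ZMod.isUnit_iff_coprime]
    refine Nat.Coprime.pow_right 2 ?_
    exact Nat.coprime_comm.1 ((Nat.Prime.coprime_iff_not_dvd hp).2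
      (fun h => by have := Nat.le_of_dvd (by norm_num) h; omega))
  exact (IsUnit.mul_right_eq_zero hunit).1 h2

theorem glaisher_np_choose_p (p : ℕ) (hp : p.Prime) (h5 : 5 ≤ p) (n : ℕ) (hn : 0 < n) :
    Nat.choose (n * p) p ≡ n [MOD p ^ 3] := by
  haveI : NeZero p := ⟨hp.ne_zero⟩
  haveI : Fact p.Prime := ⟨hp⟩
  haveI : NeZero (p ^ 2) := ⟨pow_ne_zero 2 hp.ne_zero⟩
  haveI : NeZero (p ^ 3) := ⟨pow_ne_zero 3 hp.ne_zero⟩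
  have hnp : 1 ≤ n * p := Nat.one_le_iff_ne_zero.2 (Nat.mul_ne_zero hn.ne' hp.ne_zero)
  -- Nat identities
  have hprod_nat : ∏ k ∈ Finset.Ioo 0 p, (n * p - k)
      = (Nat.factorial (p - 1)) * Nat.choose (n * p - 1) (p - 1) := by
    rw [prod_Ioo_eq_range p (fun k => n * p - k),
      ← Nat.descFactorial_eq_factorial_mul_choose,
      Nat.descFactorial_eq_prod_range]
    exact Finset.prod_congr rfl (fun i _ => by omega)
  have hfact_nat : ∏ k ∈ Finset.Ioo 0 p, k = (Nat.factorial (p - 1)) := by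
    rw [prod_Ioo_eq_range p (fun k => k)]
    exact Finset.prod_range_add_one_eq_factorial (p - 1)
  have hchoose_nat : Nat.choose (n * p) p
      = n * Nat.choose (n * p - 1) (p - 1) := by
    have h := Nat.add_one_mul_choose_eq (n * p - 1) (p - 1)
    have hs1 : n * p - 1 + 1 = n * p := by omega
    have hs2 : p - 1 + 1 = p := by omega
    rw [hs1, hs2] at h
    refine Nat.eq_of_mul_eq_mul_left hp.pos ?_
    calc p * Nat.choose (n * p) p = n * p * Nat.choose (n * p - 1) (p - 1) := by
          rw [h]; ring
    _ = p * (n * Nat.choose (n * p - 1) (p - 1)) := by ring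
  -- work in R = ZMod (p ^ 3)
  let R := ZMod (p ^ 3)
  set a : R := (n : R) * (p : R) with ha
  have hp3 : ((p : R)) ^ 3 = 0 := by
    rw [← Nat.cast_pow, ZMod.natCast_self]
  have ha3 : a ^ 3 = 0 := by rw [ha, mul_pow, hp3, mul_zero]
  obtain ⟨t, hexp, h2t⟩ := prod_one_add_nilpotent a ha3 (Finset.Ioo 0 p)
    (fun k => -(((k : R))⁻¹))
  -- the factor identity
  have hfac : ∀ k ∈ Finset.Ioo 0 p,
      ((n * p - k : ℕ) : R) = (-(k : R)) * (1 + a * (-(((k : R))⁻¹))) := by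
    intro k hk
    have hk' := Finset.mem_Ioo.1 hk
    have hu : (k : R) * ((k : R))⁻¹ = 1 :=
      ZMod.coe_mul_inv_eq_one k (coprime_of_mem_Ioo hp hk 3)
    have hle : k ≤ n * p := le_trans (le_of_lt hk'.2) (Nat.le_mul_of_pos_left p hn)
    have hcast : ((n * p - k : ℕ) : R) = (n : R) * (p : R) - (k : R) := by
      push_cast [hle]; exact congrArg (· - (k : R)) (Nat.cast_mul (α := R) n p)
    rw [hcast, ha]
    linear_combination (-((n : R) * (p : R))) * hu
  -- the product in R
  have hEven : Even (p - 1) := Nat.Odd.sub_odd (hp.odd_of_ne_two (by omega)) odd_one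
  have hprod_R : (((Nat.factorial (p - 1)) : ℕ) : R) * ((Nat.choose (n * p - 1) (p - 1) : ℕ) : R)
      = (((Nat.factorial (p - 1)) : ℕ) : R) * (1 + a * (∑ k ∈ Finset.Ioo 0 p, -(((k : R))⁻¹))
          + a ^ 2 * t) := by
    rw [← hexp]
    calc (((Nat.factorial (p - 1)) : ℕ) : R) * ((Nat.choose (n * p - 1) (p - 1) : ℕ) : R)
        = (((Nat.factorial (p - 1)) * Nat.choose (n * p - 1) (p - 1) : ℕ) : R) := by exact (Nat.cast_mul (α := R) _ _).symm
      _ = ((∏ k ∈ Finset.Ioo 0 p, (n * p - k) : ℕ) : R) := by rw [hprod_nat]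
      _ = ∏ k ∈ Finset.Ioo 0 p, ((n * p - k : ℕ) : R) := Nat.cast_prod _ _
      _ = ∏ k ∈ Finset.Ioo 0 p, ((-(k : R)) * (1 + a * (-(((k : R))⁻¹)))) :=
          Finset.prod_congr rfl hfac
      _ = (∏ k ∈ Finset.Ioo 0 p, (-(k : R)))
            * ∏ k ∈ Finset.Ioo 0 p, (1 + a * (-(((k : R))⁻¹))) :=
          Finset.prod_mul_distrib
      _ = (((Nat.factorial (p - 1)) : ℕ) : R) * ∏ k ∈ Finset.Ioo 0 p, (1 + a * (-(((k : R))⁻¹))) := by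
          congr 1
          calc ∏ k ∈ Finset.Ioo 0 p, (-(k : R))
              = ∏ k ∈ Finset.Ioo 0 p, ((-1) * (k : R)) := by
                exact Finset.prod_congr rfl (fun k _ => by ring)
            _ = ((-1 : R) ^ (Finset.Ioo 0 p).card) * ∏ k ∈ Finset.Ioo 0 p, (k : R) := by
                rw [Finset.prod_mul_distrib, Finset.prod_const]
            _ = (((Nat.factorial (p - 1)) : ℕ) : R) := by
                rw [Nat.card_Ioo, Nat.sub_zero, Even.neg_one_pow hEven, one_mul,
                  ← Nat.cast_prod, hfact_nat]
  -- kill the a * S term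
  have hd23 : p ^ 2 ∣ p ^ 3 := pow_dvd_pow p (by norm_num)
  have hd13 : p ∣ p ^ 3 := dvd_pow_self p (by norm_num)
  have hd12 : p ∣ p ^ 2 := dvd_pow_self p (by norm_num)
  set S3 : R := ∑ k ∈ Finset.Ioo 0 p, ((k : R))⁻¹ with hS3
  have hS3cast : ZMod.castHom hd23 (ZMod (p ^ 2)) S3 = 0 := by
    rw [hS3, map_sum]
    rw [Finset.sum_congr rfl
      (fun k hk => cast_inv_coprime k hd23 (coprime_of_mem_Ioo hp hk 3))]
    exact sum_inv_zmod_sq p hp h5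
  obtain ⟨c, hc⟩ := exists_eq_mul_of_castHom_eq_zero hd23 S3 hS3cast
  have haS : a * S3 = 0 := by
    have h0 : (p : R) * ((p ^ 2 : ℕ) : R) = 0 := by
      rw [show ((p : R) * ((p ^ 2 : ℕ) : R)) = ((p ^ 3 : ℕ) : R) by push_cast; ring,
        ZMod.natCast_self]
    calc a * S3 = (n : R) * c * ((p : R) * ((p ^ 2 : ℕ) : R)) := by rw [hc, ha]; ring
    _ = 0 := by rw [h0, mul_zero]
  -- kill the a ^ 2 * t term
  have hS1 : ∑ k ∈ Finset.Ioo 0 p, ((k : ZMod p))⁻¹ = 0 := by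
    have := congrArg (ZMod.castHom hd12 (ZMod p)) (sum_inv_zmod_sq p hp h5)
    rw [map_sum, map_zero] at this
    rw [← this]
    exact Finset.sum_congr rfl
      (fun k hk => (cast_inv_coprime k hd12 (coprime_of_mem_Ioo hp hk 2)).symm)
  have htcast : ZMod.castHom hd13 (ZMod p) t = 0 := by
    have h2t' := congrArg (ZMod.castHom hd13 (ZMod p)) h2t
    rw [map_mul, map_sub, map_pow, map_sum, map_sum, map_ofNat] at h2t'
    have e1 : ∀ k ∈ Finset.Ioo 0 p,
        ZMod.castHom hd13 (ZMod p) (-(((k : R))⁻¹)) = -(((k : ZMod p))⁻¹) := by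
      intro k hk
      rw [map_neg, cast_inv_coprime k hd13 (coprime_of_mem_Ioo hp hk 3)]
    have e2 : ∀ k ∈ Finset.Ioo 0 p,
        ZMod.castHom hd13 (ZMod p) ((-(((k : R))⁻¹)) ^ 2) = (((k : ZMod p))⁻¹) ^ 2 := by
      intro k hk
      rw [map_pow, map_neg, cast_inv_coprime k hd13 (coprime_of_mem_Ioo hp hk 3),
        neg_sq]
    rw [Finset.sum_congr rfl e1, Finset.sum_congr rfl e2, Finset.sum_neg_distrib,
      hS1, sum_inv_sq_zmod p hp h5] at h2t'
    simp only [neg_zero, ne_eq, zero_pow, sub_zero] at h2t'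
    have h2ne : (2 : ZMod p) ≠ 0 := by
      intro h
      rw [show ((2 : ZMod p)) = ((2 : ℕ) : ZMod p) by norm_cast,
        ZMod.natCast_eq_zero_iff] at h
      have := Nat.le_of_dvd (by norm_num) h
      omega
    rcases mul_eq_zero.1 (by rw [h2t']; norm_num : (2 : ZMod p) * ZMod.castHom hd13 (ZMod p) t = 0) with h | h
    · exact absurd h h2ne
    · exact h
  obtain ⟨c2, hc2⟩ := exists_eq_mul_of_castHom_eq_zero hd13 t htcast
  have hat : a ^ 2 * t = 0 := by
    have h0 : (p : R) ^ 2 * ((p : ℕ) : R) = 0 := by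
      rw [show ((p : R) ^ 2 * ((p : ℕ) : R)) = ((p ^ 3 : ℕ) : R) by push_cast; ring,
        ZMod.natCast_self]
    calc a ^ 2 * t = (n : R) ^ 2 * c2 * ((p : R) ^ 2 * ((p : ℕ) : R)) := by
          rw [hc2, ha]; ring
    _ = 0 := by rw [h0, mul_zero]
  -- conclude
  have hsum_neg : (∑ k ∈ Finset.Ioo 0 p, -(((k : R))⁻¹)) = -S3 := by
    rw [hS3, Finset.sum_neg_distrib]
  rw [hsum_neg] at hprod_R
  have hone : (1 + a * (-S3) + a ^ 2 * t) = (1 : R) := by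
    rw [mul_neg, haS, hat]; ring
  rw [hone, mul_one] at hprod_R
  have hfu : IsUnit (((Nat.factorial (p - 1)) : ℕ) : R) := by
    refine (ZMod.isUnit_iff_coprime _ _).2 ?_
    refine Nat.Coprime.pow_right 3 (Nat.coprime_comm.1 ?_)
    refine (Nat.Prime.coprime_iff_not_dvd hp).2 ?_
    intro h
    have := (Nat.Prime.dvd_factorial hp).1 h
    omega
  have hC' : ((Nat.choose (n * p - 1) (p - 1) : ℕ) : R) = 1 := by
    obtain ⟨u, hu⟩ := hfu
    calc ((Nat.choose (n * p - 1) (p - 1) : ℕ) : R)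
        = ((↑u⁻¹ : R) * ↑u) * ((Nat.choose (n * p - 1) (p - 1) : ℕ) : R) := by
          rw [Units.inv_mul u, one_mul]
      _ = (↑u⁻¹ : R) * ((((Nat.factorial (p - 1)) : ℕ) : R) * ((Nat.choose (n * p - 1) (p - 1) : ℕ) : R)) := by
          rw [hu]; ring
      _ = (↑u⁻¹ : R) * (((Nat.factorial (p - 1)) : ℕ) : R) := by rw [hprod_R]
      _ = 1 := by rw [← hu, Units.inv_mul u]
  have : ((Nat.choose (n * p) p : ℕ) : R) = ((n : ℕ) : R) := by
    rw [hchoose_nat, Nat.cast_mul, hC', mul_one]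
  rwa [ZMod.natCast_eq_natCast_iff] at this
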